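/- arXiv:1409.1289 — 4 statements merged into one kernel-verified Lean document; each statement's English description precedes it below -/
import Mathlib

section
/- Let G be a left-ordered group and g₁, …, gₙ nonidentity elements of G. Then there exist signs ε₁, …, εₙ ∈ {-1, 1} such that every non-empty product (with repetitions allowed) of elements from the set {g₁^{ε₁}, …, gₙ^{εₙ}} is not equal to the identity. -/
/-- In a left-ordered group, for nonidentity elements `g 1, …, g n` there exist
signs `ε i ∈ {-1,1}` such that every non-empty product (with repetitions) of
the elements `g i ^ ε i` is non-trivial. -/
theorem stmt_3 {G : Type*} [Group G] [LinearOrder G]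
    (hleft : ∀ g₁ g₂ h : G, g₁ ≤ g₂ → h * g₁ ≤ h * g₂)
    (n : ℕ) (g : Fin n → G) (hg : ∀ i, g i ≠ 1) :
    ∃ ε : Fin n → ℤ, (∀ i, ε i = -1 ∨ ε i = 1) ∧
      ∀ l : List (Fin n), l ≠ [] → (l.map fun i => g i ^ ε i).prod ≠ 1 := by
  refine ⟨fun i => if 1 < g i then 1 else -1, fun i => by dsimp only; split <;> simp, ?_⟩
  have hpos : ∀ i, 1 < g i ^ (if 1 < g i then (1:ℤ) else -1) := by
    intro i
    by_cases h : 1 < g i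
    · simp [h]
    · rw [if_neg h]
      push_neg at h
      have hlt : g i < 1 := lt_of_le_of_ne h (hg i)
      have h1 : (g i)⁻¹ * g i ≤ (g i)⁻¹ * 1 := hleft _ _ _ hlt.le
      simp only [inv_mul_cancel, mul_one] at h1
      have h2 : (g i)⁻¹ ≠ 1 := by simp [hg i]
      have h3 : 1 < (g i)⁻¹ := lt_of_le_of_ne h1 (Ne.symm h2)
      simpa using h3
  -- products of elements > 1 are > 1
  have key : ∀ l : List (Fin n), l ≠ [] →
      1 < (l.map fun i => g i ^ (if 1 < g i then (1:ℤ) else -1)).prod := by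
    intro l
    induction l with
    | nil => simp
    | cons a t ih =>
      intro _
      simp only [List.map_cons, List.prod_cons]
      rcases eq_or_ne t [] with rfl | ht
      · simpa using hpos a
      · have h1 := hpos a
        have h2 := ih ht
        calc 1 < g a ^ (if 1 < g a then (1:ℤ) else -1) := h1
          _ = _ * 1 := (mul_one _).symm
          _ ≤ _ := hleft _ _ _ h2.le
  exact fun l hl => (key l hl).ne'
end

section
/- Let G = ⟨S | R⟩ with S = {a₁,…,aₙ}, and suppose R intersects the language of every ½-large b-automaton over S. Then G is either trivial or not left-orderable. -/
/-- Letters over an alphabet of size `n`: a generator index together with a sign. -/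
abbrev Letter (n : ℕ) := Fin n × Bool

/-- A b-automaton over an alphabet of size `n`. -/
abbrev BAut (n : ℕ) := Finset (Letter n) × (Letter n → Finset (Letter n))

/-- Membership of a word in the language of a b-automaton. -/
def InLang {n : ℕ} (A : BAut n) (w : List (Letter n)) : Prop :=
  w ≠ [] ∧ (∀ a ∈ w.head?, a ∈ A.1) ∧ List.Chain' (fun s s' => s' ∈ A.2 s) w

/-- A b-automaton is `½`-large if `σ_∅ ≠ ∅` and `|σ_s| ≥ n` for every letter `s`. -/
def HalfLarge {n : ℕ} (A : BAut n) : Prop :=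
  A.1.Nonempty ∧ ∀ s : Letter n, n ≤ (A.2 s).card

/-- The element of the free group on `n` generators represented by a word. -/
def toFree {n : ℕ} (w : List (Letter n)) : FreeGroup (Fin n) :=
  (w.map fun s => if s.2 then FreeGroup.of s.1 else (FreeGroup.of s.1)⁻¹).prod

/-- A group is left-orderable if it admits a left-invariant linear order. -/
def LeftOrderable (G : Type*) [Group G] : Prop :=
  ∃ le : G → G → Prop, IsLinearOrder G le ∧
    ∀ g₁ g₂ h : G, le g₁ g₂ → le (h * g₁) (h * g₂)

/-- If the relator set `R` of `G = ⟨S | R⟩` meets the language of every ½-large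
b-automaton over `S`, then `G` is trivial or not left-orderable. -/
theorem stmt_7 {n : ℕ} (R : Set (FreeGroup (Fin n)))
    (hR : ∀ A : BAut n, HalfLarge A → ∃ w : List (Letter n), InLang A w ∧ toFree w ∈ R) :
    (∀ g : PresentedGroup R, g = 1) ∨ ¬ LeftOrderable (PresentedGroup R) := by
  classical
  by_cases htriv : ∀ g : PresentedGroup R, g = 1
  · exact Or.inl htriv
  right
  rintro ⟨le, hlin, hinv⟩
  haveI := hlin
  push_neg at htriv
  obtain ⟨g₀, hg₀⟩ := htriv
  set π : Letter n → PresentedGroup R :=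
    fun s => if s.2 then PresentedGroup.of s.1 else (PresentedGroup.of s.1)⁻¹ with hπ
  -- order facts
  have hinv_one : ∀ x : PresentedGroup R, le x 1 → le 1 x⁻¹ := by
    intro x hx
    have := hinv x 1 x⁻¹ hx
    simpa using this
  have hinv_one' : ∀ x : PresentedGroup R, le 1 x → le x⁻¹ 1 := by
    intro x hx
    have := hinv 1 x x⁻¹ hx
    simpa using this
  have hmul_le : ∀ a b : PresentedGroup R, le 1 a → le 1 b → le 1 (a * b) := by
    intro a b ha hb
    have h1 : le a (a * b) := by simpa using hinv 1 b a hb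
    exact _root_.trans_of le ha h1
  have hposmul : ∀ a b : PresentedGroup R,
      le 1 a → a ≠ 1 → le 1 b → le 1 (a * b) ∧ a * b ≠ 1 := by
    intro a b ha hane hb
    refine ⟨hmul_le a b ha hb, ?_⟩
    intro hab
    have hbinv : a⁻¹ = b := inv_eq_of_mul_eq_one_right hab
    have h1 : le 1 a⁻¹ := hbinv ▸ hb
    have h2 : le a⁻¹ 1 := hinv_one' a ha
    have h3 : (1 : PresentedGroup R) = a⁻¹ := _root_.antisymm_of le h1 h2
    exact hane (by rw [← inv_inv a, ← h3, inv_one])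
  -- some generator is nontrivial
  have hgen : ∃ i : Fin n, (PresentedGroup.of i : PresentedGroup R) ≠ 1 := by
    by_contra h
    push_neg at h
    exact hg₀ (Subgroup.mem_bot.mp
      (PresentedGroup.generated_by R ⊥ (fun j => Subgroup.mem_bot.mpr (h j)) g₀))
  obtain ⟨i₀, hi₀⟩ := hgen
  -- each generator index has a sign with nonnegative image
  have hsign : ∀ i : Fin n, ∃ b : Bool, le 1 (π (i, b)) := by
    intro i
    rcases _root_.total_of le 1 (PresentedGroup.of i : PresentedGroup R) with h | h
    · exact ⟨true, by simpa [hπ] using h⟩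
    · exact ⟨false, by simpa [hπ] using hinv_one _ h⟩
  choose bsign hbsign using hsign
  -- the automaton
  set A : BAut n :=
    (Finset.univ.filter (fun s => le 1 (π s) ∧ π s ≠ 1),
     fun _ => Finset.univ.filter (fun s => le 1 (π s))) with hA
  have hHL : HalfLarge A := by
    constructor
    · rcases _root_.total_of le 1 (PresentedGroup.of i₀ : PresentedGroup R) with h | h
      · exact ⟨(i₀, true), by simp [hA, hπ, h, hi₀]⟩
      · refine ⟨(i₀, false), ?_⟩
        simp only [hA, Finset.mem_filter, Finset.mem_univ, true_and]
        exact ⟨by simpa [hπ] using hinv_one _ h, by simp [hπ, hi₀]⟩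
    · intro s
      have h : (Finset.univ : Finset (Fin n)).card ≤
          (Finset.univ.filter (fun s => le 1 (π s))).card := by
        apply Finset.card_le_card_of_injOn (fun i => (i, bsign i))
        · intro i _
          simp only [Finset.mem_filter, Finset.mem_univ, true_and]
          exact Finset.mem_coe.mpr (Finset.mem_filter.mpr ⟨Finset.mem_univ _, hbsign i⟩)
        · intro x _ y _ hxy
          exact congrArg Prod.fst hxy
      simpa [hA] using h
  -- auxiliary inductions (stated standalone so contexts stay clean)
  have chain_all : ∀ (s : Letter n) (t : List (Letter n)),
      List.Chain (fun s s' => s' ∈ A.2 s) s t → ∀ x ∈ t, le 1 (π x) := by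
    intro s t h
    induction t generalizing s with
    | nil => simp
    | cons b l ih =>
      intro x hx
      have h' := List.isChain_cons_cons.mp h
      have hab : b ∈ A.2 s := h'.1
      rcases List.mem_cons.mp hx with rfl | hx
      · simpa [hA] using hab
      · exact ih b h'.2 x hx
  have key : ∀ (t : List (Letter n)), (∀ x ∈ t, le 1 (π x)) → le 1 ((t.map π).prod) := by
    intro t
    induction t with
    | nil =>
      intro _
      simpa using _root_.refl_of le (1 : PresentedGroup R)
    | cons x l ih =>
      intro hall
      have hx : le 1 (π x) := hall x (by simp)
      have hl : le 1 ((l.map π).prod) := ih (fun y hy => hall y (List.mem_cons_of_mem _ hy))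
      simpa using hmul_le _ _ hx hl
  obtain ⟨w, ⟨hne, hhead, hchain⟩, hwR⟩ := hR A hHL
  -- the image of the relator is 1
  have hmk1 : PresentedGroup.mk R (toFree w) = 1 :=
    (QuotientGroup.eq_one_iff _).mpr (Subgroup.subset_normalClosure hwR)
  have hcomp : ∀ s : Letter n,
      PresentedGroup.mk R (if s.2 then FreeGroup.of s.1 else (FreeGroup.of s.1)⁻¹) = π s := by
    rintro ⟨i, b⟩
    cases b <;> simp [hπ, PresentedGroup.of]
  have hprod : (w.map π).prod = 1 := by
    rw [← hmk1]
    unfold toFree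
    rw [map_list_prod, List.map_map]
    congr 1
    exact (List.map_congr_left fun s _ => (hcomp s).symm)
  obtain ⟨s, t, rfl⟩ : ∃ s t, w = s :: t := by
    cases w with
    | nil => exact absurd rfl hne
    | cons s t => exact ⟨s, t, rfl⟩
  have hshead : s ∈ A.1 := hhead s (by simp)
  have hspos : le 1 (π s) ∧ π s ≠ 1 := by
    simpa [hA] using hshead
  have hchain' : List.Chain (fun s s' => s' ∈ A.2 s) s t := hchain
  have hle_tail : le 1 ((t.map π).prod) := key t (chain_all s t hchain')
  have hfinal : le 1 (π s * (t.map π).prod) ∧ π s * (t.map π).prod ≠ 1 :=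
    hposmul _ _ hspos.1 hspos.2 hle_tail
  exact hfinal.2 (by simpa using hprod)
end

section
/- Let S = {a₁,…,aₙ} and let R be a set of words over S^± that intersects the language of every ½-large b-automaton over S. Then for every choice of signs ε₁,…,εₙ ∈ {-1,1} and every index i ∈ {1,…,n}, there exists a non-empty reduced word w ∈ R consisting only of letters from {a₁^{ε₁},…,aₙ^{εₙ}} and containing at least one occurrence of a_i^{ε_i}. -/
/-- The formal inverse of a letter. -/
def Letter.inv {n : ℕ} (s : Letter n) : Letter n := (s.1, !s.2)

/-- A word is reduced if no two consecutive letters are mutually inverse. -/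
def Reduced {n : ℕ} (w : List (Letter n)) : Prop :=
  List.Chain' (fun s s' => s' ≠ s.inv) w

/-- If `R` meets the language of every ½-large b-automaton, then for every choice
of signs `ε` and every index `i` there is a non-empty reduced word `w ∈ R`
consisting only of letters `a_j^{ε_j}` with at least one occurrence of `a_i^{ε_i}`. -/
theorem stmt_8 {n : ℕ} (R : Set (List (Letter n)))
    (hR : ∀ A : BAut n, HalfLarge A → ∃ w ∈ R, InLang A w)
    (ε : Fin n → Bool) (i : Fin n) :
    ∃ w ∈ R, w ≠ [] ∧ Reduced w ∧ (∀ s ∈ w, ∃ j : Fin n, s = (j, ε j)) ∧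
      (i, ε i) ∈ w := by
  set T : Finset (Letter n) := Finset.univ.image (fun j : Fin n => (j, ε j)) with hT
  have hcard : T.card = n := by
    rw [hT, Finset.card_image_of_injective _ (fun a b h => by
      simpa using (Prod.mk.injEq _ _ _ _ ▸ h).1),
      Finset.card_univ, Fintype.card_fin]
  obtain ⟨w, hwR, hne, hhead, hchain⟩ := hR ({(i, ε i)}, fun _ => T)
    ⟨Finset.singleton_nonempty _, fun _ => le_of_eq hcard.symm⟩
  have hall : ∀ s ∈ w, ∃ j : Fin n, s = (j, ε j) := by
    rcases w with _ | ⟨a, t⟩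
    · exact absurd rfl hne
    have ha : a = (i, ε i) := by simpa using hhead a rfl
    intro s hs
    rw [List.mem_cons] at hs
    rcases hs with hs | hs
    · exact ⟨i, hs.trans ha⟩
    · have hmem : s ∈ T := by
        clear hwR hhead ha hne
        revert hchain hs
        induction t generalizing a with
        | nil => intro _ hs; cases hs
        | cons b t ih =>
          intro hchain hs
          rcases List.isChain_cons_cons.mp hchain with ⟨hb, hc⟩
          rcases List.mem_cons.mp hs with hs | hs
          · exact hs ▸ hb
          · exact ih b hc hs
      simpa [hT, eq_comm] using hmem
  have hred : ∀ (l : List (Letter n)), (∀ s ∈ l, ∃ j : Fin n, s = (j, ε j)) → Reduced l := by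
    intro l
    induction l with
    | nil => intro _; exact List.isChain_nil
    | cons a t ih =>
      intro h
      rcases t with _ | ⟨b, t⟩
      · exact List.isChain_singleton a
      · refine List.isChain_cons_cons.mpr ⟨?_, ih (fun s hs => h s (List.mem_cons_of_mem a hs))⟩
        obtain ⟨ja, hja⟩ := h a (by simp)
        obtain ⟨jb, hjb⟩ := h b (by simp)
        simp only [hja, hjb, Letter.inv, Prod.mk.injEq, ne_eq, not_and]
        rintro rfl
        simp
  refine ⟨w, hwR, hne, hred w hall, hall, ?_⟩
  rcases w with _ | ⟨a, t⟩
  · exact absurd rfl hne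
  · have : a = (i, ε i) := by simpa using hhead a rfl
    exact this ▸ List.mem_cons_self (a := a) (l := t)
end

section
/- Let G = ⟨S | R⟩ be a group generated by a finite set S (as images of free group generators) and let B ≥ 1. Let H ≤ G be the subgroup generated by all elements represented by reduced words of length B over S. Then H has finite index in G; in fact [G : H] is at most the number of elements of G represented by reduced words of length at most B. -/
private lemma reduce_of_reduced_append_right {α : Type*} [DecidableEq α] {l₁ l₂ : List (α × Bool)}
    (h : FreeGroup.reduce (l₁ ++ l₂) = l₁ ++ l₂) : FreeGroup.reduce l₂ = l₂ := by
  by_contra hne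
  rcases (Relation.ReflTransGen.cases_head (FreeGroup.reduce.red (L := l₂))) with heq | ⟨m, hstep, _⟩
  · exact hne heq.symm
  · have hstep' : FreeGroup.Red.Step (l₁ ++ l₂) (l₁ ++ m) := hstep.append_left
    have : FreeGroup.reduce (l₁ ++ l₂) = l₁ ++ m :=
      FreeGroup.reduce.min (by rw [h]; exact Relation.ReflTransGen.single hstep')
    have hlen := hstep'.length
    rw [h] at this
    have := congrArg List.length this
    simp [List.length_append] at this hlen
    omega

private lemma reduce_of_reduced_append_left {α : Type*} [DecidableEq α] {l₁ l₂ : List (α × Bool)}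
    (h : FreeGroup.reduce (l₁ ++ l₂) = l₁ ++ l₂) : FreeGroup.reduce l₁ = l₁ := by
  by_contra hne
  rcases (Relation.ReflTransGen.cases_head (FreeGroup.reduce.red (L := l₁))) with heq | ⟨m, hstep, _⟩
  · exact hne heq.symm
  · have hstep' : FreeGroup.Red.Step (l₁ ++ l₂) (m ++ l₂) := hstep.append_right
    have : FreeGroup.reduce (l₁ ++ l₂) = m ++ l₂ :=
      FreeGroup.reduce.min (by rw [h]; exact Relation.ReflTransGen.single hstep')
    have hlen := hstep'.length
    rw [h] at this
    have := congrArg List.length this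
    simp [List.length_append] at this hlen
    omega

/-- Let `G = ⟨S | R⟩` with `S` of size `n`, `B ≥ 1`, and let `H` be the subgroup
generated by the elements of `G` represented by reduced words of length `B`.
Then `H` has finite index in `G`, bounded by the number of elements of `G`
represented by reduced words of length at most `B`. -/
theorem stmt_11 {n : ℕ} (R : Set (FreeGroup (Fin n))) (B : ℕ) (hB : 1 ≤ B)
    (H : Subgroup (PresentedGroup R))
    (hH : H = Subgroup.closure
      (PresentedGroup.mk R '' {w : FreeGroup (Fin n) | w.toWord.length = B})) :
    H.index ≠ 0 ∧
      H.index ≤ Nat.card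
        (PresentedGroup.mk R '' {w : FreeGroup (Fin n) | w.toWord.length ≤ B}) := by
  classical
  -- Every coset contains an element represented by a word of length ≤ B.
  have key : ∀ (m : ℕ) (x : FreeGroup (Fin n)), x.toWord.length ≤ m →
      ∃ w : FreeGroup (Fin n), w.toWord.length ≤ B ∧
        (QuotientGroup.mk (s := H) (PresentedGroup.mk R x) =
          QuotientGroup.mk (PresentedGroup.mk R w)) := by
    intro m
    induction m with
    | zero => intro x hx; exact ⟨x, by omega, rfl⟩
    | succ m ih =>
      intro x hx
      by_cases hle : x.toWord.length ≤ B
      · exact ⟨x, hle, rfl⟩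
      push_neg at hle
      set l := x.toWord with hl
      set l₁ := l.take (l.length - B) with hl₁
      set l₂ := l.drop (l.length - B) with hl₂
      have hsplit : l₁ ++ l₂ = l := List.take_append_drop _ _
      have hred : FreeGroup.reduce l = l := x.reduce_toWord
      have hredsplit : FreeGroup.reduce (l₁ ++ l₂) = l₁ ++ l₂ := by rw [hsplit]; exact hred
      have hl₂len : l₂.length = B := by
        rw [hl₂, List.length_drop]; omega
      have hl₁len : l₁.length = l.length - B := by
        rw [hl₁, List.length_take]; omega
      set u := FreeGroup.mk l₁ with hu
      set v := FreeGroup.mk l₂ with hv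
      have huv : u * v = x := by
        rw [hu, hv, FreeGroup.mul_mk, hsplit, hl, FreeGroup.mk_toWord]
      have hvword : v.toWord = l₂ := by
        rw [hv, FreeGroup.toWord_mk]; exact reduce_of_reduced_append_right hredsplit
      have huword : u.toWord = l₁ := by
        rw [hu, FreeGroup.toWord_mk]; exact reduce_of_reduced_append_left hredsplit
      have hvH : PresentedGroup.mk R v ∈ H := by
        rw [hH]
        exact Subgroup.subset_closure ⟨v, by rw [Set.mem_setOf_eq, hvword, hl₂len], rfl⟩
      have hcoset : (QuotientGroup.mk (s := H) (PresentedGroup.mk R x) : _ ⧸ H) =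
          QuotientGroup.mk (PresentedGroup.mk R u) := by
        rw [QuotientGroup.eq]
        have : (PresentedGroup.mk R x)⁻¹ * PresentedGroup.mk R u =
            (PresentedGroup.mk R v)⁻¹ := by
          rw [← huv, map_mul, mul_inv_rev, mul_assoc]
          group
        rw [this]
        exact inv_mem hvH
      obtain ⟨w, hwlen, hw⟩ := ih u (by rw [huword]; omega)
      exact ⟨w, hwlen, hcoset.trans hw⟩
  -- Finiteness of the representative set
  have hfin : (PresentedGroup.mk R '' {w : FreeGroup (Fin n) | w.toWord.length ≤ B}).Finite := by
    apply Set.Finite.image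
    have : {w : FreeGroup (Fin n) | w.toWord.length ≤ B} =
        FreeGroup.toWord ⁻¹' {l | l.length ≤ B} := rfl
    rw [this]
    exact (List.finite_length_le _ B).preimage (FreeGroup.toWord_injective.injOn)
  haveI := hfin.to_subtype
  -- Surjection from the representative set onto the quotient
  set T := (PresentedGroup.mk R '' {w : FreeGroup (Fin n) | w.toWord.length ≤ B})
  have hsurj : Function.Surjective (fun t : T => (QuotientGroup.mk t.1 : _ ⧸ H)) := by
    intro q
    obtain ⟨g, rfl⟩ := QuotientGroup.mk_surjective q
    obtain ⟨x, rfl⟩ := PresentedGroup.mk_surjective R g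
    obtain ⟨w, hwlen, hw⟩ := key x.toWord.length x le_rfl
    exact ⟨⟨PresentedGroup.mk R w, ⟨w, hwlen, rfl⟩⟩, hw.symm⟩
  haveI : Finite (PresentedGroup R ⧸ H) := Finite.of_surjective _ hsurj
  constructor
  · exact Subgroup.index_ne_zero_of_finite
  · exact Nat.card_le_card_of_surjective _ hsurj
end
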